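/- arXiv:1803.07772 — 4 statements merged into one kernel-verified Lean document; each statement's English description precedes it below -/
import Mathlib

section
/- Suppose p* ∈ S maximizes the energy efficiency with value E* = R(p*)/P(p*). Let Eⁱ ∈ ℝ, let pⁱ ∈ S be a maximizer of p ↦ R(p) − Eⁱ·P(p) over S, suppose R(pⁱ) − Eⁱ·P(pⁱ) > 0, and set Eⁱ⁺¹ = R(pⁱ)/P(pⁱ). Then Eⁱ < Eⁱ⁺¹ ≤ E*; that is, the Dinkelbach-type iterative update strictly increases the energy-efficiency value while never exceeding the optimal value. (Core step of Proposition 1.) -/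
/-- Core step of Proposition 1: the Dinkelbach-type update `Eⁱ⁺¹ = R(pⁱ)/P(pⁱ)`, where
`pⁱ` maximizes `p ↦ R(p) - Eⁱ·P(p)` with positive optimal value, strictly increases the
energy-efficiency value while never exceeding the optimal value `E*`. -/
theorem dinkelbach_iteration_step {S : Type*}
    (R P : S → ℝ) (hP : ∀ p, 0 < P p)
    (pstar : S) (hmax : ∀ p, R p / P p ≤ R pstar / P pstar)
    (Estar : ℝ) (hEs : Estar = R pstar / P pstar)
    (Ei : ℝ) (pi : S) (hpi : ∀ p, R p - Ei * P p ≤ R pi - Ei * P pi)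
    (hpos : 0 < R pi - Ei * P pi)
    (Ei1 : ℝ) (hEi1 : Ei1 = R pi / P pi) :
    Ei < Ei1 ∧ Ei1 ≤ Estar := by
  constructor
  · rw [hEi1, lt_div_iff₀ (hP pi)]; linarith
  · rw [hEi1, hEs]; exact hmax pi
end

section
/- Assume that for every real E the function p ↦ R(p) − E·P(p) attains its maximum over S, and that the energy efficiency R/P attains its maximum E* over S. Then for a real number E with a maximizer of p ↦ R(p) − E·P(p) over S, the optimal value max_{p∈S} (R(p) − E·P(p)) equals 0 if and only if E = E*. (Characterization underlying Theorem 1 and the stopping criterion of the iterative algorithm.) -/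
/-- Characterization underlying Theorem 1 and the stopping criterion: assuming every
subtractive problem `max_{p∈S} R(p) - E·P(p)` attains its maximum and the energy
efficiency `R/P` attains its maximum `E*`, the optimal value of the subtractive problem
at parameter `E` equals `0` if and only if `E = E*`. -/
theorem subtractive_value_zero_iff {S : Type*} [Nonempty S]
    (R P : S → ℝ) (hP : ∀ p, 0 < P p)
    (hatt : ∀ E : ℝ, ∃ q : S, ∀ p, R p - E * P p ≤ R q - E * P q)
    (pstar : S) (hmax : ∀ p, R p / P p ≤ R pstar / P pstar)
    (Estar : ℝ) (hEs : Estar = R pstar / P pstar)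
    (E : ℝ) (pE : S) (hpE : ∀ p, R p - E * P p ≤ R pE - E * P pE) :
    R pE - E * P pE = 0 ↔ E = Estar := by
  constructor
  · intro h0
    -- E = R pE / P pE since R pE = E * P pE
    have hE : E = R pE / P pE := by
      field_simp [(hP pE).ne']
      linarith
    have h1 : E ≤ Estar := by rw [hE, hEs]; exact hmax pE
    have h2 : Estar ≤ E := by
      have := hpE pstar
      rw [h0] at this
      have hPs := hP pstar
      rw [hEs, div_le_iff₀ hPs]
      linarith
    linarith
  · intro hE
    rw [hE, hEs] at hpE ⊢
    have hPs := (hP pstar).ne'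
    have h1 : R pstar - R pstar / P pstar * P pstar = 0 := by field_simp; ring
    have h2 : R pE - R pstar / P pstar * P pE ≤ 0 := by
      have := hmax pE
      have hPp := hP pE
      rw [div_le_iff₀ hPp] at this
      linarith
    have h3 := hpE pstar
    linarith
end

section
/- Let z₀ > 0 and define α = z₀/(1 + z₀) and β = log(1 + z₀) − α·log(z₀) (logarithms to any fixed base, e.g. the natural logarithm). Then for every z > 0, α·log(z) + β ≤ log(1 + z), and equality holds at z = z₀. (The SCALE lower bound.) -/
/-- The SCALE lower bound: with `α = z₀/(1 + z₀)` and `β = log(1 + z₀) - α·log z₀`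
(for `z₀ > 0`), one has `α·log z + β ≤ log(1 + z)` for all `z > 0`, with equality
at `z = z₀`. -/
theorem scale_lower_bound (z0 : ℝ) (hz0 : 0 < z0) (α β : ℝ)
    (hα : α = z0 / (1 + z0))
    (hβ : β = Real.log (1 + z0) - α * Real.log z0) :
    (∀ z : ℝ, 0 < z → α * Real.log z + β ≤ Real.log (1 + z)) ∧
    α * Real.log z0 + β = Real.log (1 + z0) := by
  have h1z0 : (0:ℝ) < 1 + z0 := by linarith
  have hα0 : 0 ≤ α := by rw [hα]; positivity
  have hα1' : 1 - α = 1 / (1 + z0) := by rw [hα]; field_simp; ring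
  have hα1 : 0 ≤ 1 - α := by rw [hα1']; positivity
  refine ⟨?_, by rw [hβ]; ring⟩
  intro z hz
  have ha : (0:ℝ) < z * (1 + z0) / z0 := by positivity
  have key := Real.geom_mean_le_arith_mean2_weighted hα0 hα1 ha.le h1z0.le (by ring)
  have harith : α * (z * (1 + z0) / z0) + (1 - α) * (1 + z0) = 1 + z := by
    rw [hα]; field_simp; ring
  rw [harith] at key
  have hlog := Real.log_le_log (by positivity) key
  rw [Real.log_mul (by positivity) (by positivity),
    Real.log_rpow ha, Real.log_rpow h1z0] at hlog
  calc α * Real.log z + β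
      = α * Real.log (z * (1 + z0) / z0) + (1 - α) * Real.log (1 + z0) := by
        rw [Real.log_div (by positivity) (by positivity),
          Real.log_mul hz.ne' h1z0.ne', hβ]; ring
    _ ≤ Real.log (1 + z) := hlog
end

section
/- Let M (the set of RRHs) and N (the set of subcarriers) be nonempty finite types and let p : M → N → ℝ be a family of transmit powers for a fixed user. Then p(m, n) · p(m', n') = 0 for all m ≠ m' and all n, n' if and only if there exists m₀ ∈ M such that p(m, n) = 0 for every m ≠ m₀ and every n. (Equivalence of the RRH-selection constraints C5–C6 with the product constraint (10).) -/
/-- Equivalence of the RRH-selection constraints C5–C6 with the product constraint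
(10): the powers of a fixed user satisfy `p(m,n)·p(m',n') = 0` for all `m ≠ m'` and
all `n, n'` iff there is a single RRH `m₀` such that `p(m,n) = 0` whenever `m ≠ m₀`. -/
theorem rrh_selection_iff {M N : Type*} [Finite M] [Finite N] [Nonempty M] [Nonempty N]
    (p : M → N → ℝ) :
    (∀ m m' : M, m ≠ m' → ∀ n n' : N, p m n * p m' n' = 0) ↔
    ∃ m₀ : M, ∀ m : M, m ≠ m₀ → ∀ n : N, p m n = 0 := by
  constructor
  · intro h
    by_cases hz : ∀ m n, p m n = 0
    · exact ⟨Classical.arbitrary M, fun m _ n => hz m n⟩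
    · push_neg at hz
      obtain ⟨m₀, n₀, hne⟩ := hz
      refine ⟨m₀, fun m hm n => ?_⟩
      have := h m m₀ hm n n₀
      rcases mul_eq_zero.mp this with h1 | h2
      · exact h1
      · exact absurd h2 hne
  · rintro ⟨m₀, h⟩ m m' hmm n n'
    by_cases hm : m = m₀
    · have : m' ≠ m₀ := fun e => hmm (hm.trans e.symm)
      rw [h m' this n', mul_zero]
    · rw [h m hm n, zero_mul]
end
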